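/- For all HyperLTL sentences φ_ℓ and φ_r over AP, one can effectively construct a HyperLTL sentence ψ over AP ∪ {$} such that for every split set T of traces over AP ∪ {$}: T_ℓ ⊨ φ_ℓ and T_r ⊨ φ_r if and only if T ⊨ ψ. -/

import Mathlib

/-! ### HyperLTL: syntax and semantics -/

/-- A trace over a set `AP` of atomic propositions. -/
abbrev Trace (AP : Type) : Type := ℕ → Set AP

/-- The suffix of a trace from position `j` onwards. -/
def Trace.shift {AP : Type} (t : Trace AP) (j : ℕ) : Trace AP := fun i => t (i + j)

/-- Quantifier-free HyperLTL formulas; trace variables are natural numbers. -/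
inductive QF (AP : Type) : Type where
  | atom : AP → ℕ → QF AP
  | neg  : QF AP → QF AP
  | disj : QF AP → QF AP → QF AP
  | next : QF AP → QF AP
  | untl : QF AP → QF AP → QF AP

/-- HyperLTL formulas: a block of trace quantifiers followed by a
quantifier-free formula (HyperLTL formulas are in prenex normal form). -/
inductive HFormula (AP : Type) : Type where
  | ex  : ℕ → HFormula AP → HFormula AP
  | all : ℕ → HFormula AP → HFormula AP
  | qf  : QF AP → HFormula AP

/-- The simultaneous shift of a trace assignment. -/
def shiftAsg {AP : Type} (As : ℕ → Trace AP) (j : ℕ) : ℕ → Trace AP :=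
  fun x => Trace.shift (As x) j

/-- Semantics of quantifier-free HyperLTL formulas w.r.t. a trace assignment. -/
def QF.sat {AP : Type} : QF AP → (ℕ → Trace AP) → Prop
  | .atom a x, As => a ∈ As x 0
  | .neg ψ, As => ¬ ψ.sat As
  | .disj ψ₁ ψ₂, As => ψ₁.sat As ∨ ψ₂.sat As
  | .next ψ, As => ψ.sat (shiftAsg As 1)
  | .untl ψ₁ ψ₂, As => ∃ j, ψ₂.sat (shiftAsg As j) ∧ ∀ j' < j, ψ₁.sat (shiftAsg As j')

/-- Semantics of HyperLTL formulas w.r.t. a set of traces and a trace assignment. -/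
def HFormula.sat {AP : Type} : HFormula AP → Set (Trace AP) → (ℕ → Trace AP) → Prop
  | .ex x φ, T, As => ∃ t ∈ T, φ.sat T (Function.update As x t)
  | .all x φ, T, As => ∀ t ∈ T, φ.sat T (Function.update As x t)
  | .qf ψ, _, As => ψ.sat As

def QF.freeVars {AP : Type} : QF AP → Set ℕ
  | .atom _ x => {x}
  | .neg ψ => ψ.freeVars
  | .disj ψ₁ ψ₂ => ψ₁.freeVars ∪ ψ₂.freeVars
  | .next ψ => ψ.freeVars
  | .untl ψ₁ ψ₂ => ψ₁.freeVars ∪ ψ₂.freeVars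

def HFormula.freeVars {AP : Type} : HFormula AP → Set ℕ
  | .ex x φ => φ.freeVars \ {x}
  | .all x φ => φ.freeVars \ {x}
  | .qf ψ => ψ.freeVars

/-- A sentence is a formula without free variables. -/
def HFormula.IsSentence {AP : Type} (φ : HFormula AP) : Prop := φ.freeVars = ∅

/-- `T` is a model of `φ` (for sentences the initial assignment is irrelevant). -/
def HModels {AP : Type} (T : Set (Trace AP)) (φ : HFormula AP) : Prop :=
  φ.sat T (fun _ _ => ∅)

/-- A HyperLTL sentence is satisfiable if it has a model. -/
def HSatisfiable {AP : Type} (φ : HFormula AP) : Prop := ∃ T, HModels T φ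

/-! ### Bounded, split sets of traces (the proposition `$` is `none`) -/

/-- A trace in `(2^AP)^b · {$}^ω`. -/
def LeftTr {AP : Type} (b : ℕ) (t : Trace (Option AP)) : Prop :=
  (∀ i < b, none ∉ t i) ∧ ∀ i, b ≤ i → t i = {none}

/-- A trace in `{$}^b · (2^AP)^ω`. -/
def RightTr {AP : Type} (b : ℕ) (t : Trace (Option AP)) : Prop :=
  (∀ i < b, t i = {none}) ∧ ∀ i, b ≤ i → none ∉ t i

/-- A nonempty set of traces is split at `b` if every trace belongs to either
the left part `(2^AP)^b · {$}^ω` or the right part `{$}^b · (2^AP)^ω`. -/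
def SplitAt {AP : Type} (T : Set (Trace (Option AP))) (b : ℕ) : Prop :=
  T.Nonempty ∧ ∀ t ∈ T, LeftTr b t ∨ RightTr b t

/-- The left part `T_ℓ` of a split set. -/
def leftPart {AP : Type} (T : Set (Trace (Option AP))) (b : ℕ) :
    Set (Trace (Option AP)) := {t | t ∈ T ∧ LeftTr b t}

/-- Prepending `b` letters `{$}` to a trace. -/
def dollarPre {AP : Type} (b : ℕ) (t : Trace (Option AP)) : Trace (Option AP) :=
  fun i => if i < b then {none} else t (i - b)

/-- The right part `T_r` of a split set: the traces in `(2^AP)^ω` whose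
`{$}^b`-prefixed version belongs to `T`. -/
def rightPart {AP : Type} (T : Set (Trace (Option AP))) (b : ℕ) :
    Set (Trace (Option AP)) :=
  {t | (∀ i, (none : Option AP) ∉ t i) ∧ dollarPre b t ∈ T}

/-! ### Auxiliary development -/

section Aux

variable {A : Type}

/-- Conjunction as derived QF connective. -/
def QF.conj (a b : QF A) : QF A := .neg (.disj (.neg a) (.neg b))
/-- Implication as derived QF connective. -/
def QF.impl (a b : QF A) : QF A := .disj (.neg a) b

@[simp] lemma QF.conj_sat (a b : QF A) (As : ℕ → Trace A) :
    (a.conj b).sat As ↔ a.sat As ∧ b.sat As := by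
  simp only [QF.conj, QF.sat]; tauto

@[simp] lemma QF.impl_sat (a b : QF A) (As : ℕ → Trace A) :
    (a.impl b).sat As ↔ (a.sat As → b.sat As) := by
  simp [QF.impl, QF.sat]; tauto

@[simp] lemma QF.conj_freeVars (a b : QF A) :
    (a.conj b).freeVars = a.freeVars ∪ b.freeVars := by
  simp [QF.conj, QF.freeVars]

@[simp] lemma QF.impl_freeVars (a b : QF A) :
    (a.impl b).freeVars = a.freeVars ∪ b.freeVars := by
  simp [QF.impl, QF.freeVars]

/-- Invariance of QF satisfaction under agreement on free variables. -/
lemma QF.sat_congr : ∀ (m : QF A) (As As' : ℕ → Trace A),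
    (∀ x ∈ m.freeVars, As x = As' x) → (m.sat As ↔ m.sat As')
  | .atom a x, As, As', h => by simp [QF.sat, h x (by simp [QF.freeVars])]
  | .neg m, As, As', h => by
      simp only [QF.sat]; rw [QF.sat_congr m As As' h]
  | .disj a b, As, As', h => by
      simp only [QF.sat]
      rw [QF.sat_congr a As As' fun x hx => h x (Or.inl hx),
        QF.sat_congr b As As' fun x hx => h x (Or.inr hx)]
  | .next m, As, As', h => by
      simp only [QF.sat]
      exact QF.sat_congr m _ _ fun x hx => by
        simp [shiftAsg, h x hx]
  | .untl a b, As, As', h => by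
      simp only [QF.sat]
      apply exists_congr; intro j
      rw [QF.sat_congr b (shiftAsg As j) (shiftAsg As' j)
        (fun x hx => by simp [shiftAsg, h x (Or.inr hx)])]
      apply and_congr_right'; apply forall_congr'; intro j'; apply imp_congr_right; intro _
      rw [QF.sat_congr a (shiftAsg As j') (shiftAsg As' j')
        (fun x hx => by simp [shiftAsg, h x (Or.inl hx)])]

/-- Invariance of HFormula satisfaction under agreement on free variables. -/
lemma HFormula.sat_congr : ∀ (φ : HFormula A) (T : Set (Trace A)) (As As' : ℕ → Trace A),
    (∀ x ∈ φ.freeVars, As x = As' x) → (φ.sat T As ↔ φ.sat T As')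
  | .ex y φ, T, As, As', h => by
      simp only [HFormula.sat]
      apply exists_congr; intro t; apply and_congr_right'
      exact HFormula.sat_congr φ T _ _ fun x hx => by
        rcases eq_or_ne x y with rfl | hne
        · simp
        · simpa [Function.update_of_ne hne] using h x ⟨hx, hne⟩
  | .all y φ, T, As, As', h => by
      simp only [HFormula.sat]
      apply forall_congr'; intro t; apply imp_congr_right; intro _
      exact HFormula.sat_congr φ T _ _ fun x hx => by
        rcases eq_or_ne x y with rfl | hne
        · simp
        · simpa [Function.update_of_ne hne] using h x ⟨hx, hne⟩
  | .qf m, T, As, As', h => QF.sat_congr m As As' h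

end Aux

section Aux2
variable {A : Type}

def QF.mapVar (σ : ℕ → ℕ) : QF A → QF A
  | .atom a x => .atom a (σ x)
  | .neg ψ => .neg (ψ.mapVar σ)
  | .disj a b => .disj (a.mapVar σ) (b.mapVar σ)
  | .next ψ => .next (ψ.mapVar σ)
  | .untl a b => .untl (a.mapVar σ) (b.mapVar σ)

lemma QF.mapVar_sat (σ : ℕ → ℕ) : ∀ (m : QF A) (As : ℕ → Trace A),
    (m.mapVar σ).sat As ↔ m.sat (fun x => As (σ x))
  | .atom a x, As => by simp [QF.mapVar, QF.sat]
  | .neg m, As => by simp [QF.mapVar, QF.sat, QF.mapVar_sat σ m]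
  | .disj a b, As => by simp [QF.mapVar, QF.sat, QF.mapVar_sat σ a, QF.mapVar_sat σ b]
  | .next m, As => by
      simp only [QF.mapVar, QF.sat, QF.mapVar_sat σ m]; rfl
  | .untl a b, As => by
      simp only [QF.mapVar, QF.sat, QF.mapVar_sat σ a, QF.mapVar_sat σ b]; rfl

lemma QF.mapVar_freeVars (σ : ℕ → ℕ) : ∀ (m : QF A),
    (m.mapVar σ).freeVars = σ '' m.freeVars
  | .atom a x => by simp [QF.mapVar, QF.freeVars]
  | .neg m => QF.mapVar_freeVars σ m
  | .disj a b => by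
      simp [QF.mapVar, QF.freeVars, QF.mapVar_freeVars σ a, QF.mapVar_freeVars σ b,
        Set.image_union]
  | .next m => QF.mapVar_freeVars σ m
  | .untl a b => by
      simp [QF.mapVar, QF.freeVars, QF.mapVar_freeVars σ a, QF.mapVar_freeVars σ b,
        Set.image_union]

def HFormula.depth : HFormula A → ℕ
  | .ex _ φ => φ.depth + 1
  | .all _ φ => φ.depth + 1
  | .qf _ => 0

def HFormula.bvList : HFormula A → List ℕ
  | .ex x φ => x :: φ.bvList
  | .all x φ => x :: φ.bvList
  | .qf _ => []

def HFormula.qfVars : HFormula A → Set ℕ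
  | .ex _ φ => φ.qfVars
  | .all _ φ => φ.qfVars
  | .qf m => m.freeVars

def HFormula.rename : HFormula A → (ℕ → ℕ) → ℕ → HFormula A
  | .ex x φ, σ, k => .ex k (φ.rename (Function.update σ x k) (k+1))
  | .all x φ, σ, k => .all k (φ.rename (Function.update σ x k) (k+1))
  | .qf m, σ, _ => .qf (m.mapVar σ)

lemma update_comp {As : ℕ → Trace A} {σ : ℕ → ℕ} {k x : ℕ} (hσ : ∀ y, σ y < k)
    (t : Trace A) :
    (fun y => Function.update As k t (Function.update σ x k y)) =
      Function.update (fun y => As (σ y)) x t := by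
  funext y
  rcases eq_or_ne y x with rfl | hne
  · rw [Function.update_self, Function.update_self, Function.update_self]
  · rw [Function.update_of_ne hne, Function.update_of_ne hne,
      Function.update_of_ne (Nat.ne_of_lt (hσ y))]

lemma update_lt {σ : ℕ → ℕ} {k x : ℕ} (hσ : ∀ y, σ y < k) :
    ∀ y, Function.update σ x k y < k + 1 := by
  intro y
  rcases eq_or_ne y x with rfl | hne
  · simp
  · rw [Function.update_of_ne hne]; exact (hσ y).trans (Nat.lt_succ_self k)

lemma HFormula.rename_sat : ∀ (φ : HFormula A) (σ : ℕ → ℕ) (k : ℕ)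
    (T : Set (Trace A)) (As : ℕ → Trace A), (∀ y, σ y < k) →
    ((φ.rename σ k).sat T As ↔ φ.sat T (fun y => As (σ y)))
  | .ex x φ, σ, k, T, As, hσ => by
      simp only [HFormula.rename, HFormula.sat]
      apply exists_congr; intro t; apply and_congr_right'
      rw [HFormula.rename_sat φ _ (k+1) T _ (update_lt hσ)]
      rw [update_comp hσ t]
  | .all x φ, σ, k, T, As, hσ => by
      simp only [HFormula.rename, HFormula.sat]
      apply forall_congr'; intro t; apply imp_congr_right; intro _
      rw [HFormula.rename_sat φ _ (k+1) T _ (update_lt hσ)]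
      rw [update_comp hσ t]
  | .qf m, σ, k, T, As, hσ => QF.mapVar_sat σ m As

lemma HFormula.rename_bvList : ∀ (φ : HFormula A) (σ : ℕ → ℕ) (k : ℕ),
    (φ.rename σ k).bvList = List.range' k φ.depth
  | .ex x φ, σ, k => by
      simp [HFormula.rename, HFormula.bvList, HFormula.depth,
        HFormula.rename_bvList φ _ (k+1), List.range'_succ]
  | .all x φ, σ, k => by
      simp [HFormula.rename, HFormula.bvList, HFormula.depth,
        HFormula.rename_bvList φ _ (k+1), List.range'_succ]
  | .qf m, σ, k => rfl

lemma HFormula.rename_freeVars : ∀ (φ : HFormula A) (σ : ℕ → ℕ) (k : ℕ),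
    (φ.rename σ k).freeVars ⊆ σ '' φ.freeVars
  | .ex x φ, σ, k => by
      simp only [HFormula.rename, HFormula.freeVars]
      intro y hy
      obtain ⟨hy1, hy2⟩ := hy
      obtain ⟨z, hz, hzy⟩ := HFormula.rename_freeVars φ _ (k+1) hy1
      rcases eq_or_ne z x with rfl | hne
      · exact absurd hzy.symm (by simpa using hy2)
      · rw [Function.update_of_ne hne] at hzy
        exact ⟨z, ⟨hz, hne⟩, hzy⟩
  | .all x φ, σ, k => by
      simp only [HFormula.rename, HFormula.freeVars]
      intro y hy
      obtain ⟨hy1, hy2⟩ := hy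
      obtain ⟨z, hz, hzy⟩ := HFormula.rename_freeVars φ _ (k+1) hy1
      rcases eq_or_ne z x with rfl | hne
      · exact absurd hzy.symm (by simpa using hy2)
      · rw [Function.update_of_ne hne] at hzy
        exact ⟨z, ⟨hz, hne⟩, hzy⟩
  | .qf m, σ, k => le_of_eq (QF.mapVar_freeVars σ m)

lemma HFormula.rename_qfVars : ∀ (φ : HFormula A) (σ : ℕ → ℕ) (k : ℕ),
    (φ.rename σ k).qfVars ⊆ σ '' φ.freeVars ∪ Set.Ico k (k + φ.depth)
  | .ex x φ, σ, k => by
      simp only [HFormula.rename, HFormula.qfVars, HFormula.freeVars, HFormula.depth]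
      intro y hy
      rcases HFormula.rename_qfVars φ _ (k+1) hy with ⟨z, hz, hzy⟩ | hmem
      · rcases eq_or_ne z x with rfl | hne
        · simp at hzy; right; subst hzy; exact ⟨le_refl _, by omega⟩
        · rw [Function.update_of_ne hne] at hzy
          exact Or.inl ⟨z, ⟨hz, hne⟩, hzy⟩
      · right; simp only [Set.mem_Ico] at hmem ⊢; omega
  | .all x φ, σ, k => by
      simp only [HFormula.rename, HFormula.qfVars, HFormula.freeVars, HFormula.depth]
      intro y hy
      rcases HFormula.rename_qfVars φ _ (k+1) hy with ⟨z, hz, hzy⟩ | hmem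
      · rcases eq_or_ne z x with rfl | hne
        · simp at hzy; right; subst hzy; exact ⟨le_refl _, by omega⟩
        · rw [Function.update_of_ne hne] at hzy
          exact Or.inl ⟨z, ⟨hz, hne⟩, hzy⟩
      · right; simp only [Set.mem_Ico] at hmem ⊢; omega
  | .qf m, σ, k => by
      simp only [HFormula.rename, HFormula.qfVars, HFormula.freeVars,
        QF.mapVar_freeVars]
      exact Set.subset_union_left
end Aux2
section Aux3
variable {A : Type}

/-- Apply a transformation to the quantifier-free matrix of a formula. -/
def HFormula.mapLeaf (f : QF A → QF A) : HFormula A → HFormula A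
  | .ex x φ => .ex x (φ.mapLeaf f)
  | .all x φ => .all x (φ.mapLeaf f)
  | .qf m => .qf (f m)

@[simp] lemma HFormula.mapLeaf_bvList (f : QF A → QF A) :
    ∀ (χ : HFormula A), (χ.mapLeaf f).bvList = χ.bvList
  | .ex x φ => by simp [HFormula.mapLeaf, HFormula.bvList, HFormula.mapLeaf_bvList f φ]
  | .all x φ => by simp [HFormula.mapLeaf, HFormula.bvList, HFormula.mapLeaf_bvList f φ]
  | .qf m => rfl

lemma HFormula.mapLeaf_freeVars {f : QF A → QF A} {V : Set ℕ}
    (hf : ∀ m, (f m).freeVars ⊆ m.freeVars ∪ V) :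
    ∀ (χ : HFormula A), (χ.mapLeaf f).freeVars ⊆ χ.freeVars ∪ V
  | .ex x φ => by
      simp only [HFormula.mapLeaf, HFormula.freeVars]
      intro y hy
      rcases HFormula.mapLeaf_freeVars hf φ hy.1 with h | h
      · exact Or.inl ⟨h, hy.2⟩
      · exact Or.inr h
  | .all x φ => by
      simp only [HFormula.mapLeaf, HFormula.freeVars]
      intro y hy
      rcases HFormula.mapLeaf_freeVars hf φ hy.1 with h | h
      · exact Or.inl ⟨h, hy.2⟩
      · exact Or.inr h
  | .qf m => hf m

lemma HFormula.mapLeaf_qfVars {f : QF A → QF A} {V : Set ℕ}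
    (hf : ∀ m, (f m).freeVars ⊆ m.freeVars ∪ V) :
    ∀ (χ : HFormula A), (χ.mapLeaf f).qfVars ⊆ χ.qfVars ∪ V
  | .ex x φ => HFormula.mapLeaf_qfVars hf φ
  | .all x φ => HFormula.mapLeaf_qfVars hf φ
  | .qf m => hf m

/-- Conjoining a fixed formula at the leaf. -/
lemma HFormula.mapLeaf_conj_sat {T : Set (Trace A)} (hT : T.Nonempty) (g : QF A)
    (χ : HFormula A) : ∀ (As : ℕ → Trace A), (∀ y ∈ χ.bvList, y ∉ g.freeVars) →
    ((χ.mapLeaf (g.conj ·)).sat T As ↔ g.sat As ∧ χ.sat T As) := by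
  induction χ with
  | ex x φ ih =>
      intro As hd
      have hx : x ∉ g.freeVars := hd x (List.mem_cons_self)
      have hd' : ∀ y ∈ φ.bvList, y ∉ g.freeVars :=
        fun y hy => hd y (List.mem_cons_of_mem _ hy)
      have congr_g : ∀ t : Trace A, g.sat (Function.update As x t) ↔ g.sat As := by
        intro t
        refine QF.sat_congr g _ As (fun y hy => ?_)
        have hne : y ≠ x := fun h => hx (h ▸ hy)
        exact Function.update_of_ne hne _ _
      simp only [HFormula.mapLeaf, HFormula.sat]
      constructor
      · rintro ⟨t, ht, hsat⟩
        rw [ih _ hd'] at hsat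
        exact ⟨(congr_g t).mp hsat.1, t, ht, hsat.2⟩
      · rintro ⟨hg, t, ht, hsat⟩
        exact ⟨t, ht, (ih _ hd').mpr ⟨(congr_g t).mpr hg, hsat⟩⟩
  | all x φ ih =>
      intro As hd
      have hx : x ∉ g.freeVars := hd x (List.mem_cons_self)
      have hd' : ∀ y ∈ φ.bvList, y ∉ g.freeVars :=
        fun y hy => hd y (List.mem_cons_of_mem _ hy)
      have congr_g : ∀ t : Trace A, g.sat (Function.update As x t) ↔ g.sat As := by
        intro t
        refine QF.sat_congr g _ As (fun y hy => ?_)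
        have hne : y ≠ x := fun h => hx (h ▸ hy)
        exact Function.update_of_ne hne _ _
      simp only [HFormula.mapLeaf, HFormula.sat]
      constructor
      · intro h
        obtain ⟨t0, ht0⟩ := hT
        have h0 := (ih _ hd').mp (h t0 ht0)
        exact ⟨(congr_g t0).mp h0.1, fun t ht => ((ih _ hd').mp (h t ht)).2⟩
      · rintro ⟨hg, h⟩ t ht
        exact (ih _ hd').mpr ⟨(congr_g t).mpr hg, h t ht⟩
  | qf m =>
      intro As _
      exact QF.conj_sat g m As

/-- Guarding the leaf by a fixed formula. -/
lemma HFormula.mapLeaf_impl_sat {T : Set (Trace A)} (hT : T.Nonempty) (g : QF A)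
    (χ : HFormula A) : ∀ (As : ℕ → Trace A), (∀ y ∈ χ.bvList, y ∉ g.freeVars) →
    ((χ.mapLeaf (g.impl ·)).sat T As ↔ (g.sat As → χ.sat T As)) := by
  induction χ with
  | ex x φ ih =>
      intro As hd
      have hx : x ∉ g.freeVars := hd x (List.mem_cons_self)
      have hd' : ∀ y ∈ φ.bvList, y ∉ g.freeVars :=
        fun y hy => hd y (List.mem_cons_of_mem _ hy)
      have congr_g : ∀ t : Trace A, g.sat (Function.update As x t) ↔ g.sat As := by
        intro t
        refine QF.sat_congr g _ As (fun y hy => ?_)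
        have hne : y ≠ x := fun h => hx (h ▸ hy)
        exact Function.update_of_ne hne _ _
      simp only [HFormula.mapLeaf, HFormula.sat]
      constructor
      · rintro ⟨t, ht, hsat⟩ hg
        exact ⟨t, ht, (ih _ hd').mp hsat ((congr_g t).mpr hg)⟩
      · intro h
        by_cases hg : g.sat As
        · obtain ⟨t, ht, hsat⟩ := h hg
          exact ⟨t, ht, (ih _ hd').mpr fun _ => hsat⟩
        · obtain ⟨t0, ht0⟩ := hT
          exact ⟨t0, ht0, (ih _ hd').mpr fun hg' =>
            absurd ((congr_g t0).mp hg') hg⟩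
  | all x φ ih =>
      intro As hd
      have hx : x ∉ g.freeVars := hd x (List.mem_cons_self)
      have hd' : ∀ y ∈ φ.bvList, y ∉ g.freeVars :=
        fun y hy => hd y (List.mem_cons_of_mem _ hy)
      have congr_g : ∀ t : Trace A, g.sat (Function.update As x t) ↔ g.sat As := by
        intro t
        refine QF.sat_congr g _ As (fun y hy => ?_)
        have hne : y ≠ x := fun h => hx (h ▸ hy)
        exact Function.update_of_ne hne _ _
      simp only [HFormula.mapLeaf, HFormula.sat]
      constructor
      · intro h hg t ht
        exact (ih _ hd').mp (h t ht) ((congr_g t).mpr hg)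
      · intro h t ht
        exact (ih _ hd').mpr fun hg => h ((congr_g t).mp hg) t ht
  | qf m =>
      intro As _
      exact QF.impl_sat g m As

end Aux3
section Guards
variable {P : Type}

def qtop (x : ℕ) : QF (Option P) := .disj (.atom none x) (.neg (.atom none x))
def qdollar (x : ℕ) : QF (Option P) := .atom none x
def qgL (x : ℕ) : QF (Option P) :=
  .untl (qtop x) (.neg (.untl (qtop x) (.neg (qdollar x))))
def qgR (x : ℕ) : QF (Option P) := .untl (qtop x) (.neg (.untl (qtop x) (qdollar x)))
def qshift (a : ℕ) (m : QF (Option P)) : QF (Option P) :=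
  .untl (qdollar a) ((QF.neg (qdollar a)).conj m)

@[simp] lemma qtop_sat (x : ℕ) (As : ℕ → Trace (Option P)) : (qtop x).sat As := by
  simp only [qtop, QF.sat]; tauto

@[simp] lemma qgL_freeVars (x : ℕ) : (qgL x : QF (Option P)).freeVars = {x} := by
  simp [qgL, qtop, qdollar, QF.freeVars]

@[simp] lemma qgR_freeVars (x : ℕ) : (qgR x : QF (Option P)).freeVars = {x} := by
  simp [qgR, qtop, qdollar, QF.freeVars]

lemma qshift_freeVars (a : ℕ) (m : QF (Option P)) :
    (qshift a m).freeVars = {a} ∪ m.freeVars := by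
  simp [qshift, qdollar, QF.freeVars, QF.conj]

lemma qgL_sat_iff (x : ℕ) (As : ℕ → Trace (Option P)) :
    (qgL x).sat As ↔ ∃ j, ∀ i, (none : Option P) ∈ As x (i + j) := by
  simp only [qgL, QF.sat, qtop, qdollar, shiftAsg, Trace.shift]
  simp only [QF.sat, not_exists, not_and, not_not, not_forall]
  constructor
  · rintro ⟨j, hj, -⟩
    refine ⟨j, fun i => ?_⟩
    by_contra hc
    obtain ⟨j', hj', hmem⟩ := hj i (by simpa using hc)
    simp at hmem
  · rintro ⟨j, hj⟩
    refine ⟨j, fun i hi => absurd (by simpa using hj i) (by simpa using hi), ?_⟩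
    intro j' _
    exact or_not

lemma qgR_sat_iff (x : ℕ) (As : ℕ → Trace (Option P)) :
    (qgR x).sat As ↔ ∃ j, ∀ i, (none : Option P) ∉ As x (i + j) := by
  simp only [qgR, QF.sat, qtop, qdollar, shiftAsg, Trace.shift]
  simp only [QF.sat, not_exists, not_and, not_not, not_forall]
  constructor
  · rintro ⟨j, hj, -⟩
    refine ⟨j, fun i => ?_⟩
    intro hc
    obtain ⟨j', hj', hmem⟩ := hj i (by simpa using hc)
    simp at hmem
  · rintro ⟨j, hj⟩
    refine ⟨j, fun i hi => absurd (by simpa using hi) (by simpa using hj i), ?_⟩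
    intro j' _
    exact or_not

lemma qgL_sat {T : Set (Trace (Option P))} {b : ℕ} (h : SplitAt T b)
    {As : ℕ → Trace (Option P)} {x : ℕ} (hx : As x ∈ T) :
    (qgL x).sat As ↔ LeftTr b (As x) := by
  rw [qgL_sat_iff]
  constructor
  · rintro ⟨j, hj⟩
    rcases h.2 _ hx with hL | hR
    · exact hL
    · exact absurd (hj b) (hR.2 (b + j) (Nat.le_add_right b j))
  · intro hL
    refine ⟨b, fun i => ?_⟩
    rw [hL.2 (i + b) (Nat.le_add_left b i)]
    exact rfl

lemma qgR_sat {T : Set (Trace (Option P))} {b : ℕ} (h : SplitAt T b)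
    {As : ℕ → Trace (Option P)} {x : ℕ} (hx : As x ∈ T) :
    (qgR x).sat As ↔ RightTr b (As x) := by
  rw [qgR_sat_iff]
  constructor
  · rintro ⟨j, hj⟩
    rcases h.2 _ hx with hL | hR
    · refine absurd ?_ (hj b)
      rw [hL.2 (b + j) (Nat.le_add_right b j)]
      exact rfl
    · exact hR
  · intro hR
    exact ⟨b, fun i => hR.2 (i + b) (Nat.le_add_left b i)⟩

lemma qshift_sat_iff {As : ℕ → Trace (Option P)} {a : ℕ} (m : QF (Option P)) :
    (qshift a m).sat As ↔
      ∃ j, ((none : Option P) ∉ As a j ∧ m.sat (shiftAsg As j)) ∧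
        ∀ j' < j, (none : Option P) ∈ As a j' := by
  simp [qshift, QF.sat, QF.conj, qdollar, shiftAsg, Trace.shift, not_or, not_not]

lemma qshift_sat {b : ℕ} {As : ℕ → Trace (Option P)} {a : ℕ}
    (hR : RightTr b (As a)) (m : QF (Option P)) :
    (qshift a m).sat As ↔ m.sat (shiftAsg As b) := by
  rw [qshift_sat_iff]
  constructor
  · rintro ⟨j, ⟨hnd, hm⟩, hpre⟩
    have hjb : b ≤ j := by
      by_contra hlt
      refine hnd ?_
      rw [hR.1 j (by omega)]
      exact rfl
    have hbj : j ≤ b := by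
      by_contra hlt
      exact hR.2 b le_rfl (hpre b (by omega))
    have hjb' : j = b := le_antisymm hbj hjb
    subst hjb'
    exact hm
  · intro hm
    refine ⟨b, ⟨hR.2 b le_rfl, hm⟩, fun j' hj' => ?_⟩
    rw [hR.1 j' hj']
    exact rfl

end Guards
section Rel
variable {P : Type}

/-- Relativization of the quantifiers to the left part. -/
def relL : HFormula (Option P) → HFormula (Option P)
  | .ex x φ => .ex x ((relL φ).mapLeaf ((qgL x).conj ·))
  | .all x φ => .all x ((relL φ).mapLeaf ((qgL x).impl ·))
  | .qf m => .qf m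

/-- Relativization of the quantifiers to the right part, shifting the matrix
using the anchor variable `a` (bound to some right trace). -/
def relR' : HFormula (Option P) → ℕ → HFormula (Option P)
  | .ex x φ, a => .ex x ((relR' φ a).mapLeaf ((qgR x).conj ·))
  | .all x φ, a => .all x ((relR' φ a).mapLeaf ((qgR x).impl ·))
  | .qf m, a => .qf (qshift a m)

/-- Relativization of the quantifiers to the right part; the outermost
variable serves as the anchor. -/
def relRtop : HFormula (Option P) → HFormula (Option P)
  | .ex x φ => .ex x ((relR' φ x).mapLeaf ((qgR x).conj ·))
  | .all x φ => .all x ((relR' φ x).mapLeaf ((qgR x).impl ·))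
  | .qf m => .qf m

@[simp] lemma relL_bvList : ∀ φ : HFormula (Option P), (relL φ).bvList = φ.bvList
  | .ex x φ => by simp [relL, HFormula.bvList, relL_bvList φ]
  | .all x φ => by simp [relL, HFormula.bvList, relL_bvList φ]
  | .qf m => rfl

@[simp] lemma relR'_bvList : ∀ (φ : HFormula (Option P)) (a : ℕ),
    (relR' φ a).bvList = φ.bvList
  | .ex x φ, a => by simp [relR', HFormula.bvList, relR'_bvList φ a]
  | .all x φ, a => by simp [relR', HFormula.bvList, relR'_bvList φ a]
  | .qf m, a => rfl

@[simp] lemma relRtop_bvList : ∀ φ : HFormula (Option P), (relRtop φ).bvList = φ.bvList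
  | .ex x φ => by simp [relRtop, HFormula.bvList]
  | .all x φ => by simp [relRtop, HFormula.bvList]
  | .qf m => rfl

lemma relL_freeVars : ∀ φ : HFormula (Option P), (relL φ).freeVars ⊆ φ.freeVars
  | .ex x φ => by
      simp only [relL, HFormula.freeVars]
      intro y hy
      have h1 := HFormula.mapLeaf_freeVars (V := {x})
        (fun m => by rw [QF.conj_freeVars, qgL_freeVars]; exact
          Set.union_subset (Set.subset_union_right) (Set.subset_union_left)) (relL φ) hy.1
      rcases h1 with h | h
      · exact ⟨relL_freeVars φ h, hy.2⟩
      · exact absurd h hy.2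
  | .all x φ => by
      simp only [relL, HFormula.freeVars]
      intro y hy
      have h1 := HFormula.mapLeaf_freeVars (V := {x})
        (fun m => by rw [QF.impl_freeVars, qgL_freeVars]; exact
          Set.union_subset (Set.subset_union_right) (Set.subset_union_left)) (relL φ) hy.1
      rcases h1 with h | h
      · exact ⟨relL_freeVars φ h, hy.2⟩
      · exact absurd h hy.2
  | .qf m => subset_rfl

lemma relR'_freeVars : ∀ (φ : HFormula (Option P)) (a : ℕ),
    (relR' φ a).freeVars ⊆ φ.freeVars ∪ {a}
  | .ex x φ, a => by
      simp only [relR', HFormula.freeVars]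
      intro y hy
      have h1 := HFormula.mapLeaf_freeVars (V := {x})
        (fun m => by rw [QF.conj_freeVars, qgR_freeVars]; exact
          Set.union_subset (Set.subset_union_right) (Set.subset_union_left)) (relR' φ a) hy.1
      rcases h1 with h | h
      · rcases relR'_freeVars φ a h with h' | h'
        · exact Or.inl ⟨h', hy.2⟩
        · exact Or.inr h'
      · exact absurd h hy.2
  | .all x φ, a => by
      simp only [relR', HFormula.freeVars]
      intro y hy
      have h1 := HFormula.mapLeaf_freeVars (V := {x})
        (fun m => by rw [QF.impl_freeVars, qgR_freeVars]; exact
          Set.union_subset (Set.subset_union_right) (Set.subset_union_left)) (relR' φ a) hy.1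
      rcases h1 with h | h
      · rcases relR'_freeVars φ a h with h' | h'
        · exact Or.inl ⟨h', hy.2⟩
        · exact Or.inr h'
      · exact absurd h hy.2
  | .qf m, a => by
      simp only [relR', HFormula.freeVars, qshift_freeVars]
      exact Set.union_subset (fun y hy => Or.inr hy) (fun y hy => Or.inl hy)

lemma relRtop_freeVars : ∀ φ : HFormula (Option P), (relRtop φ).freeVars ⊆ φ.freeVars
  | .ex x φ => by
      simp only [relRtop, HFormula.freeVars]
      intro y hy
      have h1 := HFormula.mapLeaf_freeVars (V := {x})
        (fun m => by rw [QF.conj_freeVars, qgR_freeVars]; exact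
          Set.union_subset (Set.subset_union_right) (Set.subset_union_left)) (relR' φ x) hy.1
      rcases h1 with h | h
      · rcases relR'_freeVars φ x h with h' | h'
        · exact ⟨h', hy.2⟩
        · exact absurd h' hy.2
      · exact absurd h hy.2
  | .all x φ => by
      simp only [relRtop, HFormula.freeVars]
      intro y hy
      have h1 := HFormula.mapLeaf_freeVars (V := {x})
        (fun m => by rw [QF.impl_freeVars, qgR_freeVars]; exact
          Set.union_subset (Set.subset_union_right) (Set.subset_union_left)) (relR' φ x) hy.1
      rcases h1 with h | h
      · rcases relR'_freeVars φ x h with h' | h'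
        · exact ⟨h', hy.2⟩
        · exact absurd h' hy.2
      · exact absurd h hy.2
  | .qf m => subset_rfl

lemma relL_qfVars : ∀ φ : HFormula (Option P),
    (relL φ).qfVars ⊆ φ.qfVars ∪ {y | y ∈ φ.bvList}
  | .ex x φ => by
      simp only [relL, HFormula.qfVars, HFormula.bvList]
      intro y hy
      have h1 := HFormula.mapLeaf_qfVars (V := {x})
        (fun m => by rw [QF.conj_freeVars, qgL_freeVars]; exact
          Set.union_subset (Set.subset_union_right) (Set.subset_union_left)) (relL φ) hy
      rcases h1 with h | h
      · rcases relL_qfVars φ h with h' | h'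
        · exact Or.inl h'
        · exact Or.inr (List.mem_cons_of_mem _ h')
      · exact Or.inr (h ▸ (List.mem_cons_self (a := x)))
  | .all x φ => by
      simp only [relL, HFormula.qfVars, HFormula.bvList]
      intro y hy
      have h1 := HFormula.mapLeaf_qfVars (V := {x})
        (fun m => by rw [QF.impl_freeVars, qgL_freeVars]; exact
          Set.union_subset (Set.subset_union_right) (Set.subset_union_left)) (relL φ) hy
      rcases h1 with h | h
      · rcases relL_qfVars φ h with h' | h'
        · exact Or.inl h'
        · exact Or.inr (List.mem_cons_of_mem _ h')
      · exact Or.inr (h ▸ (List.mem_cons_self (a := x)))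
  | .qf m => Set.subset_union_left

end Rel
section RelSat
variable {P : Type}

lemma shiftAsg_update (As : ℕ → Trace (Option P)) (x : ℕ) (u : Trace (Option P)) (b : ℕ) :
    shiftAsg (Function.update As x u) b =
      Function.update (shiftAsg As b) x (Trace.shift u b) := by
  funext y
  rcases eq_or_ne y x with rfl | hne
  · simp [shiftAsg]
  · simp [shiftAsg, Function.update_of_ne hne]

lemma right_shift_mem {T : Set (Trace (Option P))} {b : ℕ} {u : Trace (Option P)}
    (hu : u ∈ T) (hR : RightTr b u) : Trace.shift u b ∈ rightPart T b := by
  constructor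
  · intro i
    exact hR.2 (i + b) (Nat.le_add_left b i)
  · have : dollarPre b (Trace.shift u b) = u := by
      funext i
      by_cases hi : i < b
      · rw [dollarPre]; simp only [hi, if_true]; exact (hR.1 i hi).symm
      · rw [dollarPre]; simp only [hi, if_false]
        rw [Trace.shift, Nat.sub_add_cancel (le_of_not_gt hi)]
    rwa [this]

lemma right_pre_mem {T : Set (Trace (Option P))} {b : ℕ} {t : Trace (Option P)}
    (ht : t ∈ rightPart T b) :
    dollarPre b t ∈ T ∧ RightTr b (dollarPre b t) ∧ Trace.shift (dollarPre b t) b = t := by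
  obtain ⟨h1, h2⟩ := ht
  refine ⟨h2, ⟨fun i hi => by simp [dollarPre, hi], fun i hi => ?_⟩, ?_⟩
  · simp only [dollarPre, Nat.not_lt.mpr hi, if_false]
    exact h1 (i - b)
  · funext i
    simp [Trace.shift, dollarPre, Nat.add_sub_cancel]

lemma relL_sat {T : Set (Trace (Option P))} {b : ℕ} (h : SplitAt T b)
    (φ : HFormula (Option P)) : ∀ (As : ℕ → Trace (Option P)), φ.bvList.Nodup →
    ((relL φ).sat T As ↔ φ.sat (leftPart T b) As) := by
  induction φ with
  | ex x φ ih =>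
      intro As hnd
      have hx : x ∉ φ.bvList := by
        simpa [HFormula.bvList] using (List.nodup_cons.mp hnd).1
      have hnd' : φ.bvList.Nodup := (List.nodup_cons.mp hnd).2
      have hdj : ∀ y ∈ (relL φ).bvList, y ∉ (qgL x : QF (Option P)).freeVars := by
        intro y hy hyx
        rw [qgL_freeVars, Set.mem_singleton_iff] at hyx
        rw [relL_bvList] at hy
        exact hx (hyx ▸ hy)
      simp only [relL, HFormula.sat]
      constructor
      · rintro ⟨t, ht, hsat⟩
        rw [HFormula.mapLeaf_conj_sat h.1 _ _ _
          hdj] at hsat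
        have hgl : LeftTr b t := by
          have := hsat.1
          rw [qgL_sat h (by rw [Function.update_self]; exact ht)] at this
          rwa [Function.update_self] at this
        exact ⟨t, ⟨ht, hgl⟩, (ih _ hnd').mp hsat.2⟩
      · rintro ⟨t, ⟨ht, hgl⟩, hsat⟩
        refine ⟨t, ht, ?_⟩
        rw [HFormula.mapLeaf_conj_sat h.1 _ _ _
          hdj]
        refine ⟨?_, (ih _ hnd').mpr hsat⟩
        rw [qgL_sat h (by rw [Function.update_self]; exact ht), Function.update_self]
        exact hgl
  | all x φ ih =>
      intro As hnd
      have hx : x ∉ φ.bvList := by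
        simpa [HFormula.bvList] using (List.nodup_cons.mp hnd).1
      have hnd' : φ.bvList.Nodup := (List.nodup_cons.mp hnd).2
      have hdj : ∀ y ∈ (relL φ).bvList, y ∉ (qgL x : QF (Option P)).freeVars := by
        intro y hy hyx
        rw [qgL_freeVars, Set.mem_singleton_iff] at hyx
        rw [relL_bvList] at hy
        exact hx (hyx ▸ hy)
      simp only [relL, HFormula.sat]
      constructor
      · rintro hsat t ⟨ht, hgl⟩
        have h1 := hsat t ht
        rw [HFormula.mapLeaf_impl_sat h.1 _ _ _
          hdj] at h1
        refine (ih _ hnd').mp (h1 ?_)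
        rw [qgL_sat h (by rw [Function.update_self]; exact ht), Function.update_self]
        exact hgl
      · intro hsat t ht
        rw [HFormula.mapLeaf_impl_sat h.1 _ _ _
          hdj]
        intro hg
        rw [qgL_sat h (by rw [Function.update_self]; exact ht), Function.update_self] at hg
        exact (ih _ hnd').mpr (hsat t ⟨ht, hg⟩)
  | qf m =>
      intro As _
      exact Iff.rfl

lemma relR'_sat {T : Set (Trace (Option P))} {b : ℕ} (h : SplitAt T b)
    (φ : HFormula (Option P)) : ∀ (a : ℕ) (As : ℕ → Trace (Option P)),
    RightTr b (As a) → a ∉ φ.bvList → φ.bvList.Nodup →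
    ((relR' φ a).sat T As ↔ φ.sat (rightPart T b) (shiftAsg As b)) := by
  induction φ with
  | ex x φ ih =>
      intro a As hRa ha hnd
      have hx : x ∉ φ.bvList := by
        simpa [HFormula.bvList] using (List.nodup_cons.mp hnd).1
      have hax : a ≠ x := fun hax => ha (hax ▸ (List.mem_cons_self (a := x)))
      have ha' : a ∉ φ.bvList := fun hmem => ha (List.mem_cons_of_mem _ hmem)
      have hnd' : φ.bvList.Nodup := (List.nodup_cons.mp hnd).2
      have hdj : ∀ y ∈ (relR' φ a).bvList, y ∉ (qgR x : QF (Option P)).freeVars := by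
        intro y hy hyx
        rw [qgR_freeVars, Set.mem_singleton_iff] at hyx
        rw [relR'_bvList] at hy
        exact hx (hyx ▸ hy)
      simp only [relR', HFormula.sat]
      constructor
      · rintro ⟨u, hu, hsat⟩
        rw [HFormula.mapLeaf_conj_sat h.1 _ _ _
          hdj] at hsat
        have hgu : RightTr b u := by
          have := hsat.1
          rw [qgR_sat h (by rw [Function.update_self]; exact hu)] at this
          rwa [Function.update_self] at this
        have hIH := (ih a (Function.update As x u)
          (by rw [Function.update_of_ne hax]; exact hRa) ha' hnd').mp hsat.2
        rw [shiftAsg_update] at hIH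
        exact ⟨Trace.shift u b, right_shift_mem hu hgu, hIH⟩
      · rintro ⟨t, ht, hsat⟩
        obtain ⟨hmem, hRu, hsh⟩ := right_pre_mem ht
        refine ⟨dollarPre b t, hmem, ?_⟩
        rw [HFormula.mapLeaf_conj_sat h.1 _ _ _
          hdj]
        constructor
        · rw [qgR_sat h (by rw [Function.update_self]; exact hmem), Function.update_self]
          exact hRu
        · rw [ih a (Function.update As x (dollarPre b t))
            (by rw [Function.update_of_ne hax]; exact hRa) ha' hnd']
          rw [shiftAsg_update, hsh]
          exact hsat
  | all x φ ih =>
      intro a As hRa ha hnd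
      have hx : x ∉ φ.bvList := by
        simpa [HFormula.bvList] using (List.nodup_cons.mp hnd).1
      have hax : a ≠ x := fun hax => ha (hax ▸ (List.mem_cons_self (a := x)))
      have ha' : a ∉ φ.bvList := fun hmem => ha (List.mem_cons_of_mem _ hmem)
      have hnd' : φ.bvList.Nodup := (List.nodup_cons.mp hnd).2
      have hdj : ∀ y ∈ (relR' φ a).bvList, y ∉ (qgR x : QF (Option P)).freeVars := by
        intro y hy hyx
        rw [qgR_freeVars, Set.mem_singleton_iff] at hyx
        rw [relR'_bvList] at hy
        exact hx (hyx ▸ hy)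
      simp only [relR', HFormula.sat]
      constructor
      · rintro hsat t ht
        obtain ⟨hmem, hRu, hsh⟩ := right_pre_mem ht
        have h1 := hsat (dollarPre b t) hmem
        rw [HFormula.mapLeaf_impl_sat h.1 _ _ _
          hdj] at h1
        have h2 := h1 (by
          rw [qgR_sat h (by rw [Function.update_self]; exact hmem), Function.update_self]
          exact hRu)
        rw [ih a (Function.update As x (dollarPre b t))
          (by rw [Function.update_of_ne hax]; exact hRa) ha' hnd'] at h2
        rw [shiftAsg_update, hsh] at h2
        exact h2
      · intro hsat u hu
        rw [HFormula.mapLeaf_impl_sat h.1 _ _ _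
          hdj]
        intro hg
        rw [qgR_sat h (by rw [Function.update_self]; exact hu), Function.update_self] at hg
        rw [ih a (Function.update As x u)
          (by rw [Function.update_of_ne hax]; exact hRa) ha' hnd']
        rw [shiftAsg_update]
        exact hsat (Trace.shift u b) (right_shift_mem hu hg)
  | qf m =>
      intro a As hRa _ _
      exact qshift_sat hRa m

lemma relRtop_sat {T : Set (Trace (Option P))} {b : ℕ} (h : SplitAt T b)
    (φ : HFormula (Option P)) (As : ℕ → Trace (Option P)) (hfv : φ.freeVars = ∅)
    (hnd : φ.bvList.Nodup) :
    ((relRtop φ).sat T As ↔ φ.sat (rightPart T b) (shiftAsg As b)) := by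
  cases φ with
  | ex x φ =>
      have hx : x ∉ φ.bvList := by
        simpa [HFormula.bvList] using (List.nodup_cons.mp hnd).1
      have hnd' : φ.bvList.Nodup := (List.nodup_cons.mp hnd).2
      have hdj : ∀ y ∈ (relR' φ x).bvList, y ∉ (qgR x : QF (Option P)).freeVars := by
        intro y hy hyx
        rw [qgR_freeVars, Set.mem_singleton_iff] at hyx
        rw [relR'_bvList] at hy
        exact hx (hyx ▸ hy)
      simp only [relRtop, HFormula.sat]
      constructor
      · rintro ⟨u, hu, hsat⟩
        rw [HFormula.mapLeaf_conj_sat h.1 _ _ _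
          hdj] at hsat
        have hgu : RightTr b u := by
          have := hsat.1
          rw [qgR_sat h (by rw [Function.update_self]; exact hu)] at this
          rwa [Function.update_self] at this
        have hIH := (relR'_sat h φ x (Function.update As x u)
          (by rw [Function.update_self]; exact hgu) hx hnd').mp hsat.2
        rw [shiftAsg_update] at hIH
        exact ⟨Trace.shift u b, right_shift_mem hu hgu, hIH⟩
      · rintro ⟨t, ht, hsat⟩
        obtain ⟨hmem, hRu, hsh⟩ := right_pre_mem ht
        refine ⟨dollarPre b t, hmem, ?_⟩
        rw [HFormula.mapLeaf_conj_sat h.1 _ _ _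
          hdj]
        constructor
        · rw [qgR_sat h (by rw [Function.update_self]; exact hmem), Function.update_self]
          exact hRu
        · rw [relR'_sat h φ x (Function.update As x (dollarPre b t))
            (by rw [Function.update_self]; exact hRu) hx hnd']
          rw [shiftAsg_update, hsh]
          exact hsat
  | all x φ =>
      have hx : x ∉ φ.bvList := by
        simpa [HFormula.bvList] using (List.nodup_cons.mp hnd).1
      have hnd' : φ.bvList.Nodup := (List.nodup_cons.mp hnd).2
      have hdj : ∀ y ∈ (relR' φ x).bvList, y ∉ (qgR x : QF (Option P)).freeVars := by
        intro y hy hyx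
        rw [qgR_freeVars, Set.mem_singleton_iff] at hyx
        rw [relR'_bvList] at hy
        exact hx (hyx ▸ hy)
      simp only [relRtop, HFormula.sat]
      constructor
      · rintro hsat t ht
        obtain ⟨hmem, hRu, hsh⟩ := right_pre_mem ht
        have h1 := hsat (dollarPre b t) hmem
        rw [HFormula.mapLeaf_impl_sat h.1 _ _ _
          hdj] at h1
        have h2 := h1 (by
          rw [qgR_sat h (by rw [Function.update_self]; exact hmem), Function.update_self]
          exact hRu)
        rw [relR'_sat h φ x (Function.update As x (dollarPre b t))
          (by rw [Function.update_self]; exact hRu) hx hnd'] at h2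
        rw [shiftAsg_update, hsh] at h2
        exact h2
      · intro hsat u hu
        rw [HFormula.mapLeaf_impl_sat h.1 _ _ _
          hdj]
        intro hg
        rw [qgR_sat h (by rw [Function.update_self]; exact hu), Function.update_self] at hg
        rw [relR'_sat h φ x (Function.update As x u)
          (by rw [Function.update_self]; exact hg) hx hnd']
        rw [shiftAsg_update]
        exact hsat (Trace.shift u b) (right_shift_mem hu hg)
  | qf m =>
      simp only [relRtop, HFormula.sat]
      exact QF.sat_congr m As (shiftAsg As b)
        (fun y hy => absurd (hfv ▸ hy : y ∈ (∅ : Set ℕ)) (Set.notMem_empty y))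

end RelSat
section Merge
variable {A : Type}

/-- Merging two prenex formulas into one (conjoining the matrices). -/
def hmerge : HFormula A → HFormula A → HFormula A
  | .ex x φ, χ => .ex x (hmerge φ χ)
  | .all x φ, χ => .all x (hmerge φ χ)
  | .qf m, χ => χ.mapLeaf (m.conj ·)

lemma hmerge_sat {T : Set (Trace A)} (hT : T.Nonempty) (χ : HFormula A)
    (φ : HFormula A) : ∀ (As : ℕ → Trace A),
    (∀ y ∈ χ.bvList, y ∉ φ.qfVars) → (∀ y ∈ φ.bvList, y ∉ χ.freeVars) →
    ((hmerge φ χ).sat T As ↔ φ.sat T As ∧ χ.sat T As) := by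
  induction φ with
  | ex x φ ih =>
      intro As h1 h2
      have hxχ : x ∉ χ.freeVars := h2 x (List.mem_cons_self)
      have h2' : ∀ y ∈ φ.bvList, y ∉ χ.freeVars :=
        fun y hy => h2 y (List.mem_cons_of_mem _ hy)
      have hχcongr : ∀ t : Trace A, χ.sat T (Function.update As x t) ↔ χ.sat T As := by
        intro t
        refine HFormula.sat_congr χ T _ As (fun y hy => ?_)
        have hne : y ≠ x := fun hxy => hxχ (hxy ▸ hy)
        exact Function.update_of_ne hne _ _
      simp only [hmerge, HFormula.sat]
      constructor
      · rintro ⟨t, ht, hsat⟩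
        rw [ih _ h1 h2'] at hsat
        exact ⟨⟨t, ht, hsat.1⟩, (hχcongr t).mp hsat.2⟩
      · rintro ⟨⟨t, ht, hsat⟩, hχ⟩
        exact ⟨t, ht, (ih _ h1 h2').mpr ⟨hsat, (hχcongr t).mpr hχ⟩⟩
  | all x φ ih =>
      intro As h1 h2
      have hxχ : x ∉ χ.freeVars := h2 x (List.mem_cons_self)
      have h2' : ∀ y ∈ φ.bvList, y ∉ χ.freeVars :=
        fun y hy => h2 y (List.mem_cons_of_mem _ hy)
      have hχcongr : ∀ t : Trace A, χ.sat T (Function.update As x t) ↔ χ.sat T As := by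
        intro t
        refine HFormula.sat_congr χ T _ As (fun y hy => ?_)
        have hne : y ≠ x := fun hxy => hxχ (hxy ▸ hy)
        exact Function.update_of_ne hne _ _
      simp only [hmerge, HFormula.sat]
      constructor
      · intro hsat
        obtain ⟨t0, ht0⟩ := hT
        have h0 := (ih _ h1 h2').mp (hsat t0 ht0)
        exact ⟨fun t ht => ((ih _ h1 h2').mp (hsat t ht)).1, (hχcongr t0).mp h0.2⟩
      · rintro ⟨hφ, hχ⟩ t ht
        exact (ih _ h1 h2').mpr ⟨hφ t ht, (hχcongr t).mpr hχ⟩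
  | qf m =>
      intro As h1 _
      exact HFormula.mapLeaf_conj_sat hT m χ As h1

lemma hmerge_freeVars (χ : HFormula A) : ∀ φ : HFormula A,
    (hmerge φ χ).freeVars ⊆
      (φ.freeVars ∪ χ.freeVars) ∪ (φ.qfVars \ {y | y ∈ φ.bvList})
  | .ex x φ => by
      simp only [hmerge, HFormula.freeVars, HFormula.qfVars, HFormula.bvList]
      intro y hy
      obtain ⟨hy1, hy2⟩ := hy
      have hne : y ≠ x := by simpa using hy2
      rcases hmerge_freeVars χ φ hy1 with (h | h) | h
      · exact Or.inl (Or.inl ⟨h, hy2⟩)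
      · exact Or.inl (Or.inr h)
      · refine Or.inr ⟨h.1, ?_⟩
        intro hmem
        simp only [Set.mem_setOf_eq, List.mem_cons] at hmem
        rcases hmem with rfl | hmem
        · exact hne rfl
        · exact h.2 hmem
  | .all x φ => by
      simp only [hmerge, HFormula.freeVars, HFormula.qfVars, HFormula.bvList]
      intro y hy
      obtain ⟨hy1, hy2⟩ := hy
      have hne : y ≠ x := by simpa using hy2
      rcases hmerge_freeVars χ φ hy1 with (h | h) | h
      · exact Or.inl (Or.inl ⟨h, hy2⟩)
      · exact Or.inl (Or.inr h)
      · refine Or.inr ⟨h.1, ?_⟩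
        intro hmem
        simp only [Set.mem_setOf_eq, List.mem_cons] at hmem
        rcases hmem with rfl | hmem
        · exact hne rfl
        · exact h.2 hmem
  | .qf m => by
      simp only [hmerge, HFormula.freeVars, HFormula.qfVars, HFormula.bvList]
      intro y hy
      rcases HFormula.mapLeaf_freeVars (V := m.freeVars)
        (fun m' => by rw [QF.conj_freeVars]; exact
          Set.union_subset Set.subset_union_right Set.subset_union_left) χ hy with h | h
      · exact Or.inl (Or.inr h)
      · exact Or.inr ⟨h, by simp⟩

end Merge

theorem split_combination' (AP : Type)
    (φl φr : HFormula (Option AP)) (hl : φl.IsSentence) (hr : φr.IsSentence) :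
    ∃ ψ : HFormula (Option AP), ψ.IsSentence ∧
      ∀ (T : Set (Trace (Option AP))) (b : ℕ), SplitAt T b →
        ((HModels (leftPart T b) φl ∧ HModels (rightPart T b) φr) ↔ HModels T ψ) := by
  classical
  set dl := φl.depth with hdl
  set φl' := φl.rename (fun _ => 0) 1 with hφl'
  set φr' := φr.rename (fun _ => 0) (1 + dl) with hφr'
  have hfl : φl.freeVars = ∅ := hl
  have hfr : φr.freeVars = ∅ := hr
  have hfl' : φl'.freeVars = ∅ := by
    rw [Set.eq_empty_iff_forall_notMem]
    intro y hy
    have := HFormula.rename_freeVars φl (fun _ => 0) 1 hy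
    rw [hfl] at this
    simpa using this
  have hfr' : φr'.freeVars = ∅ := by
    rw [Set.eq_empty_iff_forall_notMem]
    intro y hy
    have := HFormula.rename_freeVars φr (fun _ => 0) (1 + dl) hy
    rw [hfr] at this
    simpa using this
  have hbl : φl'.bvList = List.range' 1 dl := HFormula.rename_bvList φl _ 1
  have hbr : φr'.bvList = List.range' (1 + dl) φr.depth := HFormula.rename_bvList φr _ _
  have hnl : φl'.bvList.Nodup := by rw [hbl]; exact List.nodup_range' 1 Nat.one_pos
  have hnr : φr'.bvList.Nodup := by rw [hbr]; exact List.nodup_range' 1 Nat.one_pos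
  have hqfl : φl'.qfVars ⊆ Set.Ico 1 (1 + dl) := by
    intro y hy
    have := HFormula.rename_qfVars φl (fun _ => 0) 1 hy
    rw [hfl] at this
    simpa using this
  have hqfL : (relL φl').qfVars ⊆ Set.Ico 1 (1 + dl) := by
    intro y hy
    rcases relL_qfVars φl' hy with h | h
    · exact hqfl h
    · rw [Set.mem_setOf_eq, hbl, List.mem_range'_1] at h
      exact ⟨h.1, h.2⟩
  refine ⟨hmerge (relL φl') (relRtop φr'), ?_, ?_⟩
  · rw [HFormula.IsSentence, Set.eq_empty_iff_forall_notMem]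
    intro y hy
    rcases hmerge_freeVars _ _ hy with (h | h) | h
    · rw [Set.eq_empty_iff_forall_notMem] at hfl'
      exact hfl' y (relL_freeVars φl' h)
    · rw [Set.eq_empty_iff_forall_notMem] at hfr'
      exact hfr' y (relRtop_freeVars φr' h)
    · refine h.2 ?_
      rw [Set.mem_setOf_eq, relL_bvList, hbl, List.mem_range'_1]
      have := hqfL h.1
      exact ⟨this.1, this.2⟩
  · intro T b hs
    have key := hmerge_sat hs.1 (relRtop φr') (relL φl') (fun _ _ => ∅)
      (by
        intro y hy hq
        rw [relRtop_bvList, hbr, List.mem_range'_1] at hy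
        have h2 := hqfL hq
        rw [Set.mem_Ico] at h2
        omega)
      (by
        intro y _ hmem
        rw [Set.eq_empty_iff_forall_notMem] at hfr'
        exact hfr' y (relRtop_freeVars φr' hmem))
    simp only [HModels]
    rw [key]
    rw [relL_sat hs φl' _ hnl, relRtop_sat hs φr' _ hfr' hnr]
    rw [hφl', HFormula.rename_sat φl _ 1 _ _ (fun _ => Nat.one_pos)]
    rw [hφr', HFormula.rename_sat φr _ (1 + dl) _ _ (fun _ => by omega)]
    rw [HFormula.sat_congr φl (leftPart T b) _ (fun _ _ => ∅)
      (fun y hy => absurd (hfl ▸ hy : y ∈ (∅ : Set ℕ)) (Set.notMem_empty y))]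
    rw [HFormula.sat_congr φr (rightPart T b) _ (fun _ _ => ∅)
      (fun y hy => absurd (hfr ▸ hy : y ∈ (∅ : Set ℕ)) (Set.notMem_empty y))]
    exact Iff.rfl

/-- **Combining specifications of the two parts of a split model**: for all
HyperLTL sentences `φℓ` and `φr` there is a sentence `ψ` such that a split set
`T` satisfies `ψ` iff `T_ℓ ⊨ φℓ` and `T_r ⊨ φr`. -/
theorem split_combination (AP : Type) [Fintype AP]
    (φl φr : HFormula (Option AP)) (hl : φl.IsSentence) (hr : φr.IsSentence) :
    ∃ ψ : HFormula (Option AP), ψ.IsSentence ∧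
      ∀ (T : Set (Trace (Option AP))) (b : ℕ), SplitAt T b →
        ((HModels (leftPart T b) φl ∧ HModels (rightPart T b) φr) ↔ HModels T ψ) := by
  exact split_combination' AP φl φr hl hr
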